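/- arXiv:1710.02780 — 2 statements merged into one kernel-verified Lean document; each statement's English description precedes it below -/
import Mathlib

section
/- Let k > 0, let R₀ : [0,∞) → ℝ^{3×3} and Ω₀ : [0,∞) → ℝ³ be differentiable with R₀(t)ᵀR₀(t) = I and R₀′(t) = R₀(t) Ω̂₀(t) for all t, and let ΔR : [0,∞) → ℝ^{3×3} and ΔΩ : [0,∞) → ℝ³ be differentiable functions satisfying the linearized equations ΔR′ = ΔR Ω̂₀ + R₀ (ΔΩ)^∧ − 2k R₀ Sym(R₀ᵀ ΔR) for all t ≥ 0. Define Z(t) = R₀(t)ᵀ ΔR(t), Z_s = Sym(Z), and Z_k = Skew(Z). Then for all t ≥ 0: Z_s′ = [Z_s, Ω̂₀] − 2k Z_s and Z_k′ = [Z_k, Ω̂₀] + (ΔΩ)^∧. -/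
open Matrix

noncomputable section

attribute [local instance] Matrix.frobeniusNormedAddCommGroup Matrix.frobeniusNormedSpace

/-- The hat map `∧ : ℝ³ → ℝ^{3×3}`. -/
def hat (Ω : Fin 3 → ℝ) : Matrix (Fin 3) (Fin 3) ℝ :=
  !![0, -Ω 2, Ω 1; Ω 2, 0, -Ω 0; -Ω 1, Ω 0, 0]

/-- The symmetrization operator `Sym(A) = (A + Aᵀ)/2`. -/
def symPart {n : ℕ} (A : Matrix (Fin n) (Fin n) ℝ) : Matrix (Fin n) (Fin n) ℝ :=
  (1 / 2 : ℝ) • (A + Aᵀ)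

/-- The skew-symmetrization operator `Skew(A) = (A − Aᵀ)/2`. -/
def skewPart {n : ℕ} (A : Matrix (Fin n) (Fin n) ℝ) : Matrix (Fin n) (Fin n) ℝ :=
  (1 / 2 : ℝ) • (A - Aᵀ)

attribute [local instance] Matrix.frobeniusNormedRing Matrix.frobeniusNormedAlgebra

set_option maxHeartbeats 1000000 in
lemma hasDerivWithinAt_matmul {f g : ℝ → Matrix (Fin 3) (Fin 3) ℝ}
    {f' g' : Matrix (Fin 3) (Fin 3) ℝ} {s : Set ℝ} {t : ℝ}
    (hf : HasDerivWithinAt f f' s t)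
    (hg : HasDerivWithinAt g g' s t) :
    HasDerivWithinAt (fun x => f x * g x) (f' * g t + f t * g') s t :=
  HasDerivWithinAt.mul hf hg

lemma hat_transpose (Ω : Fin 3 → ℝ) : (hat Ω)ᵀ = -hat Ω := by
  ext i j
  fin_cases i <;> fin_cases j <;> simp [hat]

/-- transpose as a continuous linear map -/
def transCLM : Matrix (Fin 3) (Fin 3) ℝ →L[ℝ] Matrix (Fin 3) (Fin 3) ℝ :=
  LinearMap.toContinuousLinearMap
    (Matrix.transposeLinearEquiv (Fin 3) (Fin 3) ℝ ℝ).toLinearMap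

lemma hasDerivWithinAt_transpose {f : ℝ → Matrix (Fin 3) (Fin 3) ℝ}
    {f' : Matrix (Fin 3) (Fin 3) ℝ} {s : Set ℝ} {t : ℝ}
    (hf : HasDerivWithinAt f f' s t) :
    HasDerivWithinAt (fun x => (f x)ᵀ) (f'ᵀ) s t := by
  have := (transCLM.hasFDerivAt (x := f t)).comp_hasDerivWithinAt t hf
  exact this

set_option maxHeartbeats 1000000 in
theorem stmt12 (k : ℝ) (hk : 0 < k)
    (R₀ ΔR : ℝ → Matrix (Fin 3) (Fin 3) ℝ) (Ω₀ ΔΩ : ℝ → Fin 3 → ℝ)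
    (horth : ∀ t ∈ Set.Ici (0 : ℝ), (R₀ t)ᵀ * R₀ t = 1)
    (hR₀ : ∀ t ∈ Set.Ici (0 : ℝ),
      HasDerivWithinAt R₀ (R₀ t * hat (Ω₀ t)) (Set.Ici (0 : ℝ)) t)
    (hΔΩ : ∀ t ∈ Set.Ici (0 : ℝ), DifferentiableWithinAt ℝ ΔΩ (Set.Ici (0 : ℝ)) t)
    (hΔR : ∀ t ∈ Set.Ici (0 : ℝ),
      HasDerivWithinAt ΔR
        (ΔR t * hat (Ω₀ t) + R₀ t * hat (ΔΩ t) -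
          (2 * k) • (R₀ t * symPart ((R₀ t)ᵀ * ΔR t)))
        (Set.Ici (0 : ℝ)) t) :
    ∀ t ∈ Set.Ici (0 : ℝ),
      HasDerivWithinAt (fun s => symPart ((R₀ s)ᵀ * ΔR s))
        (symPart ((R₀ t)ᵀ * ΔR t) * hat (Ω₀ t) - hat (Ω₀ t) * symPart ((R₀ t)ᵀ * ΔR t) -
          (2 * k) • symPart ((R₀ t)ᵀ * ΔR t))
        (Set.Ici (0 : ℝ)) t ∧
      HasDerivWithinAt (fun s => skewPart ((R₀ s)ᵀ * ΔR s))
        (skewPart ((R₀ t)ᵀ * ΔR t) * hat (Ω₀ t) - hat (Ω₀ t) * skewPart ((R₀ t)ᵀ * ΔR t) +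
          hat (ΔΩ t))
        (Set.Ici (0 : ℝ)) t := by
  intro t ht
  set Z := fun s => (R₀ s)ᵀ * ΔR s with hZdef
  set W := hat (Ω₀ t) with hW
  set D := hat (ΔΩ t) with hD
  have hRT : HasDerivWithinAt (fun s => (R₀ s)ᵀ) ((R₀ t * W)ᵀ) (Set.Ici 0) t :=
    hasDerivWithinAt_transpose (hR₀ t ht)
  have hZ : HasDerivWithinAt Z
      ((R₀ t * W)ᵀ * ΔR t + (R₀ t)ᵀ *
        (ΔR t * W + R₀ t * D - (2 * k) • (R₀ t * symPart (Z t))))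
      (Set.Ici 0) t := hasDerivWithinAt_matmul hRT (hΔR t ht)
  have hO := horth t ht
  have hZ' : HasDerivWithinAt Z
      (- (W * Z t) + Z t * W + D - (2 * k) • symPart (Z t)) (Set.Ici 0) t := by
    convert hZ using 1
    simp only [hZdef, hW, hD, Matrix.transpose_mul, hat_transpose]
    simp only [mul_add, mul_sub, ← mul_assoc, Matrix.mul_smul, hO, one_mul]
    noncomm_ring
  have hZT : HasDerivWithinAt (fun s => (Z s)ᵀ)
      ((- (W * Z t) + Z t * W + D - (2 * k) • symPart (Z t))ᵀ) (Set.Ici 0) t :=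
    hasDerivWithinAt_transpose hZ'
  have hsymT : (symPart (Z t))ᵀ = symPart (Z t) := by
    simp [symPart, Matrix.transpose_add, Matrix.transpose_smul, add_comm]
  constructor
  · have h := ((hZ'.add hZT).const_smul (1 / 2 : ℝ))
    have key : symPart (Z t) * W - W * symPart (Z t) - (2 * k) • symPart (Z t) =
        (1 / 2 : ℝ) • (-(W * Z t) + Z t * W + D - (2 * k) • symPart (Z t) +
          (-(W * Z t) + Z t * W + D - (2 * k) • symPart (Z t))ᵀ) := by
      simp only [symPart, hW, hD, Matrix.transpose_add, Matrix.transpose_sub,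
        Matrix.transpose_neg, Matrix.transpose_smul, Matrix.transpose_mul, hat_transpose,
        Matrix.transpose_transpose]
      simp only [mul_add, add_mul, mul_neg, neg_mul, sub_mul, mul_sub, smul_add, smul_sub,
        smul_neg, Matrix.mul_smul, Matrix.smul_mul, smul_smul]
      module
    rw [key]
    exact h
  · have h := ((hZ'.sub hZT).const_smul (1 / 2 : ℝ))
    have key : skewPart (Z t) * W - W * skewPart (Z t) + D =
        (1 / 2 : ℝ) • (-(W * Z t) + Z t * W + D - (2 * k) • symPart (Z t) -
          (-(W * Z t) + Z t * W + D - (2 * k) • symPart (Z t))ᵀ) := by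
      simp only [symPart, skewPart, hW, hD, Matrix.transpose_add, Matrix.transpose_sub,
        Matrix.transpose_neg, Matrix.transpose_smul, Matrix.transpose_mul, hat_transpose,
        Matrix.transpose_transpose]
      simp only [mul_add, add_mul, mul_neg, neg_mul, sub_mul, mul_sub, smul_add, smul_sub,
        smul_neg, Matrix.mul_smul, Matrix.smul_mul, smul_smul]
      module
    rw [key]
    exact h
end
end

section
/- Let k > 0, let A : [0,∞) → ℝ^{3×3} be a continuous matrix-valued function, and let Z_s : [0,∞) → ℝ^{3×3} be a differentiable function such that Z_s(t) is symmetric for all t ≥ 0 and Z_s′(t) = [Z_s(t), A(t)] − 2k Z_s(t) for all t ≥ 0. Then ‖Z_s(t)‖ ≤ e^{−2kt} ‖Z_s(0)‖ for all t ≥ 0, where ‖·‖ is the Frobenius norm. -/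
open Matrix

noncomputable section

attribute [local instance] Matrix.frobeniusNormedAddCommGroup Matrix.frobeniusNormedSpace

/-- The Frobenius inner product `⟨A,B⟩ = tr(AᵀB)`. -/
def finner {n : ℕ} (A B : Matrix (Fin n) (Fin n) ℝ) : ℝ := (Aᵀ * B).trace

/-- The Frobenius norm induced by `finner`. -/
def fnorm {n : ℕ} (A : Matrix (Fin n) (Fin n) ℝ) : ℝ := Real.sqrt (finner A A)

lemma finner_eq_sum {n : ℕ} (M N : Matrix (Fin n) (Fin n) ℝ) :
    finner M N = ∑ i, ∑ j, M j i * N j i := by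
  simp [finner, Matrix.trace, Matrix.mul_apply, Matrix.diag]

lemma finner_comm {n : ℕ} (M N : Matrix (Fin n) (Fin n) ℝ) : finner M N = finner N M := by
  rw [finner_eq_sum, finner_eq_sum]
  simp [mul_comm]

lemma finner_self_nonneg {n : ℕ} (M : Matrix (Fin n) (Fin n) ℝ) : 0 ≤ finner M M := by
  rw [finner_eq_sum]
  apply Finset.sum_nonneg; intro i _
  apply Finset.sum_nonneg; intro j _
  exact mul_self_nonneg _

/-- entry map as a continuous linear map -/
def entryCLM {n : ℕ} (i j : Fin n) : Matrix (Fin n) (Fin n) ℝ →L[ℝ] ℝ :=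
  LinearMap.toContinuousLinearMap
    { toFun := fun M => M i j, map_add' := fun _ _ => rfl, map_smul' := fun _ _ => rfl }

lemma key_alg {n : ℕ} (Z B : Matrix (Fin n) (Fin n) ℝ) (c : ℝ) (hZ : Zᵀ = Z) :
    ∑ i, ∑ j, ((Z * B - B * Z - c • Z) j i * Z j i + Z j i * (Z * B - B * Z - c • Z) j i)
      = (-(2 * c)) * finner Z Z := by
  set W := Z * B - B * Z - c • Z with hW
  have hsplit : ∑ i, ∑ j, (W j i * Z j i + Z j i * W j i) = finner W Z + finner Z W := by
    rw [finner_eq_sum, finner_eq_sum, ← Finset.sum_add_distrib]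
    congr 1; ext i; rw [← Finset.sum_add_distrib]
  rw [hsplit, finner_comm W Z]
  have h1 : finner Z (Z * B) = (Z * Z * B).trace := by
    rw [finner, hZ, Matrix.mul_assoc]
  have h2 : finner Z (B * Z) = (Z * Z * B).trace := by
    rw [finner, hZ, ← Matrix.mul_assoc, Matrix.trace_mul_comm, Matrix.mul_assoc]
  have h3 : finner Z W = -(c * finner Z Z) := by
    rw [hW, finner, Matrix.mul_sub, Matrix.mul_sub, Matrix.trace_sub, Matrix.trace_sub,
      Matrix.mul_smul, Matrix.trace_smul]
    have := h1; have := h2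
    simp only [finner] at h1 h2 ⊢
    rw [h1, h2]
    simp [finner, smul_eq_mul]
  rw [h3]; ring

theorem stmt13 (k : ℝ) (hk : 0 < k)
    (A : ℝ → Matrix (Fin 3) (Fin 3) ℝ) (hA : ContinuousOn A (Set.Ici (0 : ℝ)))
    (Zs : ℝ → Matrix (Fin 3) (Fin 3) ℝ)
    (hsym : ∀ t ∈ Set.Ici (0 : ℝ), (Zs t)ᵀ = Zs t)
    (hZs : ∀ t ∈ Set.Ici (0 : ℝ),
      HasDerivWithinAt Zs (Zs t * A t - A t * Zs t - (2 * k) • Zs t)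
        (Set.Ici (0 : ℝ)) t) :
    ∀ t ∈ Set.Ici (0 : ℝ), fnorm (Zs t) ≤ Real.exp (-(2 * k) * t) * fnorm (Zs 0) := by
  set g : ℝ → ℝ := fun t => finner (Zs t) (Zs t) with hg
  -- derivative of g
  have hgderiv : ∀ t ∈ Set.Ici (0 : ℝ),
      HasDerivWithinAt g (-(2 * (2 * k)) * g t) (Set.Ici (0 : ℝ)) t := by
    intro t ht
    have hentry : ∀ i j : Fin 3, HasDerivWithinAt (fun s => Zs s j i)
        ((Zs t * A t - A t * Zs t - (2 * k) • Zs t) j i) (Set.Ici (0 : ℝ)) t := by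
      intro i j
      exact ((entryCLM j i).hasFDerivAt).comp_hasDerivWithinAt t (hZs t ht)
    have hsum : HasDerivWithinAt (fun s => ∑ i, ∑ j, Zs s j i * Zs s j i)
        (∑ i, ∑ j, ((Zs t * A t - A t * Zs t - (2 * k) • Zs t) j i * Zs t j i
          + Zs t j i * (Zs t * A t - A t * Zs t - (2 * k) • Zs t) j i))
        (Set.Ici (0 : ℝ)) t := by
      apply HasDerivWithinAt.fun_sum
      intro i _
      apply HasDerivWithinAt.fun_sum
      intro j _
      exact (hentry i j).mul (hentry i j)
    have := key_alg (Zs t) (A t) (2 * k) (hsym t ht)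
    rw [this] at hsum
    have heq : (fun s => ∑ i, ∑ j, Zs s j i * Zs s j i) = g := by
      funext s; exact (finner_eq_sum (Zs s) (Zs s)).symm
    rw [heq] at hsum
    exact hsum
  -- continuity of g on Ici 0
  have hgcont : ContinuousOn g (Set.Ici (0 : ℝ)) := fun t ht =>
    (hgderiv t ht).continuousWithinAt
  -- h := exp(4k t) * g t is constant
  have hconst : ∀ t ∈ Set.Ici (0 : ℝ), Real.exp (2 * (2 * k) * t) * g t = g 0 := by
    intro t ht
    have h0 : (0 : ℝ) ≤ t := ht
    have := constant_of_has_deriv_right_zero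
      (f := fun s => Real.exp (2 * (2 * k) * s) * g s) (a := 0) (b := t)
      (by
        apply ContinuousOn.mul
        · exact (Real.continuous_exp.comp (continuous_const.mul continuous_id)).continuousOn
        · exact hgcont.mono (Set.Icc_subset_Ici_self))
      (by
        intro x hx
        have hx0 : x ∈ Set.Ici (0 : ℝ) := hx.1
        have hexp : HasDerivWithinAt (fun s => Real.exp (2 * (2 * k) * s))
            (2 * (2 * k) * Real.exp (2 * (2 * k) * x)) (Set.Ici x) x := by
          have : HasDerivAt (fun s => Real.exp (2 * (2 * k) * s))
              (Real.exp (2 * (2 * k) * x) * (2 * (2 * k))) x := by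
            have h1 : HasDerivAt (fun s : ℝ => 2 * (2 * k) * s) (2 * (2 * k)) x := by
              simpa using (hasDerivAt_id x).const_mul (2 * (2 * k))
            exact (Real.hasDerivAt_exp _).comp x h1
          exact (this.hasDerivWithinAt).congr_deriv (by ring)
        have hgx : HasDerivWithinAt g (-(2 * (2 * k)) * g x) (Set.Ici x) x :=
          (hgderiv x hx0).mono (Set.Ici_subset_Ici.mpr hx0)
        have := hexp.fun_mul hgx
        exact this.congr_deriv (by ring)
        )
      t (Set.mem_Icc.mpr ⟨h0, le_refl t⟩)
    simpa using this
  intro t ht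
  have hgt := hconst t ht
  have hgval : g t = Real.exp (-(2 * (2 * k)) * t) * g 0 := by
    have hepos : Real.exp (2 * (2 * k) * t) ≠ 0 := (Real.exp_pos _).ne'
    rw [← hgt, neg_mul, Real.exp_neg, ← mul_assoc, inv_mul_cancel₀ hepos, one_mul]
  have hg0 : 0 ≤ g 0 := finner_self_nonneg _
  rw [fnorm, fnorm]
  show Real.sqrt (g t) ≤ _
  rw [hgval]
  rw [Real.sqrt_mul (Real.exp_pos _).le]
  have hsq : Real.sqrt (Real.exp (-(2 * (2 * k)) * t)) = Real.exp (-(2 * k) * t) := by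
    rw [show (-(2 * (2 * k)) * t) = (-(2 * k) * t) + (-(2 * k) * t) by ring, Real.exp_add,
      Real.sqrt_mul_self (Real.exp_pos _).le]
  rw [hsq]
end
end
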